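/- arXiv:math/0605698 — 3 statements merged into one kernel-verified Lean document; each statement's English description precedes it below -/
import Mathlib

section
/- Let S be a semigroup and a, b ∈ S group-bound elements with a ∼ₚ b. Then a·e_a ∼ₚ b·e_b. -/
variable {S : Type*} [Semigroup S]

/-- Primary conjugacy: `a = x*y` and `b = y*x` for some `x, y`. -/
def PConj (a b : S) : Prop := ∃ x y : S, a = x * y ∧ b = y * x

/-- Conjugacy: the transitive closure of primary conjugacy. -/
def SConj : S → S → Prop := Relation.TransGen PConj

/-- `pw a n` is `a ^ n` for `n ≥ 1` (with junk value `a` at `n = 0`). -/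
def pw (a : S) : ℕ → S
  | 0 => a
  | 1 => a
  | n + 2 => pw a (n + 1) * a

/-- An element is a group element iff it lies in some subgroup of `S`:
there is an idempotent `e` acting as identity on `a`, and an inverse of `a`
relative to `e`. -/
def IsGroupElement (a : S) : Prop :=
  ∃ e b : S, e * e = e ∧ e * a = a ∧ a * e = a ∧ a * b = e ∧ b * a = e

/-- An element is group-bound if some positive power is a group element. -/
def GroupBound (a : S) : Prop := ∃ n : ℕ, 1 ≤ n ∧ IsGroupElement (pw a n)

/-- Green's L-relation: same principal left ideal in `S¹`. -/
def LRel (a b : S) : Prop :=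
  (∃ u : WithOne S, u * (a : WithOne S) = (b : WithOne S)) ∧
  (∃ u : WithOne S, u * (b : WithOne S) = (a : WithOne S))

/-- Green's R-relation: same principal right ideal in `S¹`. -/
def RRel (a b : S) : Prop :=
  (∃ u : WithOne S, (a : WithOne S) * u = (b : WithOne S)) ∧
  (∃ u : WithOne S, (b : WithOne S) * u = (a : WithOne S))

/-- Green's H-relation. -/
def HRel (a b : S) : Prop := LRel a b ∧ RRel a b

/-- Green's D-relation. -/
def DRel (a b : S) : Prop := ∃ c : S, LRel a c ∧ RRel c b

section helpers
variable {M : Type*} [Monoid M]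

private lemma mh {a b c : M} (h : a * b = c) (d : M) : a * (b * d) = c * d := by
  rw [← mul_assoc, h]

lemma my_struct {C E : M} (hE : E * E = E)
    (h1 : ∃ u, u * C = E) (h2 : ∃ u, u * E = C)
    (h3 : ∃ u, C * u = E) (h4 : ∃ u, E * u = C) :
    C * E = C ∧ E * C = C ∧
      ∃ G : M, G * C = E ∧ C * G = E ∧ E * G = G ∧ G * E = G := by
  obtain ⟨u1, hu1⟩ := h1
  obtain ⟨u2, hu2⟩ := h2
  obtain ⟨u3, hu3⟩ := h3
  obtain ⟨u4, hu4⟩ := h4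
  have hCE : C * E = C := by
    conv_lhs => rw [← hu2]
    rw [mul_assoc, hE, hu2]
  have hEC : E * C = C := by
    conv_lhs => rw [← hu4]
    rw [← mul_assoc, hE, hu4]
  have hG : E * u3 = u1 * E := by
    conv_lhs => rw [← hu1]
    rw [mul_assoc, hu3]
  refine ⟨hCE, hEC, E * u3, ?_, ?_, ?_, ?_⟩
  · rw [hG, mul_assoc, hEC, hu1]
  · rw [← mul_assoc, hCE, hu3]
  · rw [← mul_assoc, hE]
  · rw [hG, mul_assoc, hE, ← hG]

lemma my_idem_pow {E : M} (hE : E * E = E) : ∀ K, 1 ≤ K → E ^ K = E := by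
  intro K hK
  induction K with
  | zero => omega
  | succ n ih =>
    rcases Nat.lt_or_ge 1 (n+1) with h | h
    · have : 1 ≤ n := by omega
      rw [pow_succ, ih this, hE]
    · have : n = 0 := by omega
      simp [this]

lemma my_raise {B E : M} (m K : ℕ) (hm : 1 ≤ m) (hK : m ≤ K) (hE : E * E = E)
    (h1 : ∃ u, u * B ^ m = E) (h2 : ∃ u, u * E = B ^ m)
    (h3 : ∃ u, B ^ m * u = E) (h4 : ∃ u, E * u = B ^ m) :
    B ^ K * E = B ^ K ∧ E * B ^ K = B ^ K ∧
      (∃ u, u * B ^ K = E) ∧ (∃ u, B ^ K * u = E) := by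
  obtain ⟨hCE, hEC, G, hGC, hCG, hEG, hGE⟩ := my_struct hE h1 h2 h3 h4
  have hCcomm : Commute (B ^ m) G := hCG.trans hGC.symm
  have hK1 : 1 ≤ K := le_trans hm hK
  have hGCpow : G ^ K * (B ^ m) ^ K = E := by
    rw [← hCcomm.symm.mul_pow, hGC, my_idem_pow hE K hK1]
  have hCGpow : (B ^ m) ^ K * G ^ K = E := by
    rw [← hCcomm.mul_pow, hCG, my_idem_pow hE K hK1]
  have hKsplit : K - m + m = K := Nat.sub_add_cancel hK
  refine ⟨?_, ?_, ?_, ?_⟩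
  · rw [← hKsplit, pow_add, mul_assoc, hCE]
  · rw [← hKsplit, Nat.add_comm, pow_add, ← mul_assoc, hEC]
  · have hmK : K ≤ m * K := Nat.le_mul_of_pos_left K (by omega)
    refine ⟨G ^ K * B ^ (m * K - K), ?_⟩
    rw [mul_assoc, ← pow_add, Nat.sub_add_cancel hmK, pow_mul, hGCpow]
  · have hmK : K ≤ m * K := Nat.le_mul_of_pos_left K (by omega)
    refine ⟨B ^ (m * K - K) * G ^ K, ?_⟩
    rw [← mul_assoc, ← pow_add, Nat.add_comm, Nat.sub_add_cancel hmK, pow_mul, hCGpow]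

lemma my_tmul {X Y A G : M} {m : ℕ} (hXY : X * Y = A) (hc : Commute (A ^ m) G)
    (i j l k : ℕ) (hk : k + 1 = m) :
    (Y * (A ^ i * G ^ j) * X) * (Y * (A ^ k * G ^ l) * X)
      = Y * (A ^ (i + m) * G ^ (j + l)) * X := by
  have hAk : A * A ^ k = A ^ m := by rw [← hk, ← pow_succ']
  have hcj : G ^ j * A ^ m = A ^ m * G ^ j := (hc.symm.pow_left j).eq
  simp only [mul_assoc]
  rw [mh hXY, mh hAk, mh hcj, mul_assoc, mh ((pow_add A i m).symm),
    mh ((pow_add G j l).symm)]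

lemma my_pows {X Y A B : M} (hA : X * Y = A) (hB : Y * X = B) :
    ∀ k : ℕ, B ^ (k + 1) = Y * A ^ k * X := by
  intro k
  induction k with
  | zero => simp [← hB]
  | succ n ih =>
    rw [pow_succ, ih, ← hB]
    simp only [mul_assoc]
    rw [mh hA, mh ((pow_succ A n).symm)]

end helpers

lemma pw_coe (a : S) : ∀ n : ℕ, 1 ≤ n → ((pw a n : S) : WithOne S) = (a : WithOne S) ^ n := by
  intro n hn
  induction n with
  | zero => omega
  | succ m ih =>
    rcases Nat.lt_or_ge 1 (m+1) with h | h
    · have hm : 1 ≤ m := by omega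
      obtain ⟨m', rfl⟩ : ∃ m', m = m' + 1 := ⟨m - 1, by omega⟩
      show ((pw a (m' + 2) : S) : WithOne S) = _
      rw [show pw a (m' + 2) = pw a (m' + 1) * a from rfl, WithOne.coe_mul, ih hm, ← pow_succ]
    · have : m = 0 := by omega
      subst this
      show ((pw a 1 : S) : WithOne S) = _
      rw [show pw a 1 = a from rfl, pow_one]

theorem pconj_mul_idempotents (a b ea eb : S) (ta tb : ℕ)
    (hta : 1 ≤ ta) (htb : 1 ≤ tb)
    (hea : ea * ea = ea) (hHa : HRel (pw a ta) ea)
    (heb : eb * eb = eb) (hHb : HRel (pw b tb) eb)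
    (h : PConj a b) : PConj (a * ea) (b * eb) := by
  obtain ⟨x, y, hxy, hyx⟩ := h
  obtain ⟨t, rfl⟩ : ∃ t, ta = t + 1 := ⟨ta - 1, by omega⟩
  set M := WithOne S
  set A : M := (a : M) with hA
  set B : M := (b : M) with hBdef
  set X : M := (x : M)
  set Y : M := (y : M)
  set E : M := (ea : M)
  set F : M := (eb : M)
  have hXY : X * Y = A := by rw [hA, hxy]; exact (WithOne.coe_mul x y).symm
  have hYX : Y * X = B := by rw [hBdef, hyx]; exact (WithOne.coe_mul y x).symm
  have hEidem : E * E = E := by rw [show E * E = ((ea * ea : S) : M) from (WithOne.coe_mul ea ea).symm, hea]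
  have hFidem : F * F = F := by rw [show F * F = ((eb * eb : S) : M) from (WithOne.coe_mul eb eb).symm, heb]
  -- convert H-relation hypotheses
  obtain ⟨⟨ha1, ha2⟩, ha3, ha4⟩ := hHa
  obtain ⟨⟨hb1, hb2⟩, hb3, hb4⟩ := hHb
  rw [pw_coe a (t+1) (by omega)] at ha1 ha2 ha3 ha4
  rw [pw_coe b tb (by omega)] at hb1 hb2 hb3 hb4
  -- structure for the a-side
  obtain ⟨hCE, hEC, G, hGC, hCG, hEG, hGE⟩ := my_struct hEidem ha1 ha2 ha3 ha4
  have hCcomm : Commute (A ^ (t+1)) G := hCG.trans hGC.symm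
  have hc : Commute (A ^ (2*t+2)) G := by
    have h2 := hCcomm.pow_left 2
    rw [← pow_mul] at h2
    rwa [show (t+1) * 2 = 2*t+2 by ring] at h2
  -- key identities
  have F1 : A ^ (2*t+2) * G ^ 2 = E := by
    have : (A ^ (t+1) * G) ^ 2 = A ^ ((t+1)*2) * G ^ 2 := by
      rw [hCcomm.mul_pow, pow_mul]
    rw [show (2:ℕ)*t+2 = (t+1)*2 by ring, ← this, hCG, pow_two, hEidem]
  have F2 : E * G ^ 2 = G ^ 2 := by rw [pow_two, ← mul_assoc, hEG]
  have F3 : A ^ (2*t+1) * E = A ^ (2*t+1) := by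
    rw [show (2:ℕ)*t+1 = t + (t+1) by ring, pow_add, mul_assoc, hCE]
  have redJ2 : ∀ j l : ℕ, j + l = 2 →
      A ^ (2*t+1 + (2*t+2)) * G ^ (j+l) = A ^ (2*t+1) * G ^ 0 := by
    intro j l hjl
    rw [hjl, pow_add, mul_assoc, F1, F3, pow_zero, mul_one]
  have redJ4 : ∀ j l : ℕ, j + l = 4 →
      A ^ (2*t+1 + (2*t+2)) * G ^ (j+l) = A ^ (2*t+1) * G ^ 2 := by
    intro j l hjl
    rw [hjl, show (4:ℕ) = 2+2 from rfl, pow_add G, pow_add A, mul_assoc,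
      ← mul_assoc (A ^ (2*t+2)), F1, F2]
  -- the candidate idempotent
  set Fa : M := Y * (A ^ (2*t+1) * G ^ 2) * X with hFadef
  have hBm : B ^ (2*t+2) = Y * (A ^ (2*t+1) * G ^ 0) * X := by
    rw [pow_zero, mul_one, show (2:ℕ)*t+2 = (2*t+1) + 1 from rfl, my_pows hXY hYX]
  have hk : (2*t+1) + 1 = 2*t+2 := rfl
  have hFaFa : Fa * Fa = Fa := by
    rw [hFadef, my_tmul hXY hc _ _ _ _ hk, redJ4 2 2 rfl]
  have hW1 : (Y * (A ^ (2*t+1) * G ^ 4) * X) * B ^ (2*t+2) = Fa := by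
    rw [hBm, my_tmul hXY hc _ _ _ _ hk, redJ4 4 0 rfl]
  have hW2 : B ^ (2*t+2) * (Y * (A ^ (2*t+1) * G ^ 4) * X) = Fa := by
    rw [hBm, my_tmul hXY hc _ _ _ _ hk, redJ4 0 4 rfl]
  have hW3 : Fa * B ^ (2*t+2) = B ^ (2*t+2) := by
    conv_lhs => rw [hBm, hFadef, my_tmul hXY hc _ _ _ _ hk, redJ2 2 0 rfl]
    rw [hBm]
  have hW4 : B ^ (2*t+2) * Fa = B ^ (2*t+2) := by
    conv_lhs => rw [hBm, hFadef, my_tmul hXY hc _ _ _ _ hk, redJ2 0 2 rfl]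
    rw [hBm]
  -- raise both idempotents to a common power
  set K : ℕ := (2*t+2) + tb with hKdef
  obtain ⟨-, hFaBK, ⟨u, hu⟩, -⟩ :=
    my_raise (B := B) (E := Fa) (2*t+2) K (by omega) (by omega) hFaFa
      ⟨_, hW1⟩ ⟨_, hW4⟩ ⟨_, hW2⟩ ⟨_, hW3⟩
  obtain ⟨hBKF, -, -, ⟨v, hv⟩⟩ :=
    my_raise (B := B) (E := F) tb K htb (by omega) hFidem hb1 hb2 hb3 hb4
  -- uniqueness of the idempotent
  have e1 : Fa * F = Fa := by rw [← hu, mul_assoc, hBKF, hu]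
  have e2 : Fa * F = F := by rw [← hv, ← mul_assoc, hFaBK, hv]
  have hFaF : Fa = F := e1.symm.trans e2
  -- conclude
  refine ⟨x, y * ea, ?_, ?_⟩
  · rw [hxy, mul_assoc]
  · apply WithOne.coe_inj.mp
    rw [WithOne.coe_mul, WithOne.coe_mul, WithOne.coe_mul]
    show B * F = Y * E * X
    have hB00 : B = Y * (A ^ 0 * G ^ 0) * X := by
      rw [pow_zero, pow_zero, one_mul, mul_one, hYX]
    rw [← hFaF, hFadef, hB00, my_tmul hXY hc _ _ _ _ hk,
      show (0:ℕ) + (2*t+2) = 2*t+2 from Nat.zero_add _, show (0:ℕ)+2 = 2 from rfl, F1]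
end

section
/- Let S be a semigroup and a, b ∈ S group elements. Then a ∼ b (conjugate, i.e., in the transitive closure of primary conjugacy) if and only if a ∼ₚ b. That is, on group elements, primary conjugacy is transitive. -/
variable {S : Type*} [Semigroup S]

/-! ### Auxiliary lemmas -/

lemma pw_one (x : S) : pw x 1 = x := rfl

lemma pw_succ (x : S) {n : ℕ} (hn : 1 ≤ n) : pw x (n + 1) = pw x n * x := by
  cases n with
  | zero => omega
  | succ m => rfl

lemma mul_pw_comm (x : S) : ∀ n, 1 ≤ n → x * pw x n = pw x n * x := by
  intro n
  induction n with
  | zero => omega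
  | succ m ih =>
    intro _
    rcases Nat.eq_zero_or_pos m with hm | hm
    · subst hm; rfl
    · rw [pw_succ x hm, ← mul_assoc, ih hm, mul_assoc]

lemma pw_add (x : S) : ∀ n m, 1 ≤ n → 1 ≤ m → pw x n * pw x m = pw x (n + m) := by
  intro n m hn
  induction m with
  | zero => omega
  | succ m ih =>
    intro _
    rcases Nat.eq_zero_or_pos m with hm | hm
    · subst hm; exact (pw_succ x hn).symm
    · rw [pw_succ x hm, ← mul_assoc, ih hm, ← pw_succ x (by omega), Nat.add_assoc]

lemma left_id_pw {e x : S} (h : e * x = x) : ∀ n, 1 ≤ n → e * pw x n = pw x n := by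
  intro n
  induction n with
  | zero => omega
  | succ m ih =>
    intro _
    rcases Nat.eq_zero_or_pos m with hm | hm
    · subst hm; exact h
    · rw [pw_succ x hm, ← mul_assoc, ih hm]

lemma right_id_pw {e x : S} (h : x * e = x) : ∀ n, 1 ≤ n → pw x n * e = pw x n := by
  intro n
  induction n with
  | zero => omega
  | succ m ih =>
    intro _
    rcases Nat.eq_zero_or_pos m with hm | hm
    · subst hm; exact h
    · rw [pw_succ x hm, mul_assoc, h]

lemma mul_pw_inv_comm {a a' e : S} (h1 : a * a' = e) (h2 : a' * a = e) :
    ∀ n, 1 ≤ n → a * pw a' n = pw a' n * a := by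
  intro n
  induction n with
  | zero => omega
  | succ m ih =>
    intro _
    rcases Nat.eq_zero_or_pos m with hm | hm
    · subst hm; exact h1.trans h2.symm
    · rw [pw_succ a' hm, ← mul_assoc, ih hm, mul_assoc, mul_assoc, h1, h2]

lemma pw_mul_pw_inv {a a' e : S} (h1 : a * a' = e) (h2 : a' * a = e) (h3 : a' * e = a') :
    ∀ n, 1 ≤ n → pw a n * pw a' n = e := by
  intro n
  induction n with
  | zero => omega
  | succ m ih =>
    intro _
    rcases Nat.eq_zero_or_pos m with hm | hm
    · subst hm; exact h1
    · calc pw a (m + 1) * pw a' (m + 1)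
          = (pw a m * a) * (pw a' m * a') := by rw [pw_succ a hm, pw_succ a' hm]
        _ = pw a m * (a * pw a' m * a') := by simp only [mul_assoc]
        _ = pw a m * (pw a' m * a * a') := by rw [mul_pw_inv_comm h1 h2 m hm]
        _ = pw a m * (pw a' m * (a * a')) := by rw [mul_assoc (pw a' m) a a']
        _ = pw a m * (pw a' m * e) := by rw [h1]
        _ = pw a m * pw a' m := by rw [right_id_pw h3 m hm]
        _ = e := ih hm

lemma pw_intertwine {t a b : S} (h : t * a = b * t) :
    ∀ n, 1 ≤ n → pw b n * t = t * pw a n := by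
  intro n
  induction n with
  | zero => omega
  | succ m ih =>
    intro _
    rcases Nat.eq_zero_or_pos m with hm | hm
    · subst hm; exact h.symm
    · rw [pw_succ b hm, pw_succ a hm, mul_assoc, ← h, ← mul_assoc, ih hm, mul_assoc]

lemma sandwich_pw {u v c b : S} (hc : c = u * v) (hb : b = v * u) :
    ∀ n, 1 ≤ n → v * pw c n * u = pw b (n + 1) := by
  intro n
  induction n with
  | zero => omega
  | succ m ih =>
    intro _
    rcases Nat.eq_zero_or_pos m with hm | hm
    · subst hm
      show v * c * u = pw b 2
      show v * c * u = pw b 1 * b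
      rw [pw_one, hc, hb, ← mul_assoc, mul_assoc (v*u) v u]
    · have hcu : c * u = u * b := by rw [hc, hb, mul_assoc]
      calc v * pw c (m + 1) * u
          = v * (pw c m * c) * u := by rw [pw_succ c hm]
        _ = (v * pw c m) * (c * u) := by simp only [mul_assoc]
        _ = (v * pw c m) * (u * b) := by rw [hcu]
        _ = (v * pw c m * u) * b := by simp only [mul_assoc]
        _ = pw b (m + 1) * b := by rw [ih hm]
        _ = pw b (m + 2) := (pw_succ b (by omega)).symm

/-- Normalized group-element witnesses. -/
lemma isGroupElement_norm {a : S} (ha : IsGroupElement a) :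
    ∃ e a' : S, e * a = a ∧ a * e = a ∧ a * a' = e ∧ a' * a = e ∧ e * a' = a' ∧ a' * e = a' := by
  obtain ⟨e, b, hee, hea, hae, hab, hba⟩ := ha
  refine ⟨e, e * b * e, hea, hae, ?_, ?_, ?_, ?_⟩
  · rw [← mul_assoc, ← mul_assoc, hae, hab, hee]
  · rw [mul_assoc, hea, mul_assoc, hba, hee]
  · rw [← mul_assoc, ← mul_assoc, hee]
  · rw [mul_assoc, mul_assoc, hee, ← mul_assoc]

/-- From a conjugacy chain, extract intertwining data. -/
lemma sconj_data {a b : S} (h : SConj a b) :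
    ∃ s t : S, ∃ k : ℕ, 1 ≤ k ∧ a * s = s * b ∧ t * a = b * t ∧
      s * t = pw a k ∧ t * s = pw b k := by
  induction h with
  | single hp =>
    obtain ⟨x, y, hxy, hyx⟩ := hp
    refine ⟨x, y, 1, le_refl 1, ?_, ?_, hxy.symm, hyx.symm⟩
    · rw [hxy, hyx, mul_assoc]
    · rw [hxy, hyx, mul_assoc]
  | @tail c d _ hcb ih =>
    obtain ⟨s, t, k, hk, h1, h2, h3, h4⟩ := ih
    obtain ⟨u, v, hc, hb⟩ := hcb
    refine ⟨s * u, v * t, k + 1, by omega, ?_, ?_, ?_, ?_⟩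
    · calc a * (s * u) = (a * s) * u := by rw [mul_assoc]
        _ = (s * c) * u := by rw [h1]
        _ = s * (c * u) := by rw [mul_assoc]
        _ = s * (u * d) := by rw [hc, hb, mul_assoc]
        _ = (s * u) * d := by rw [mul_assoc]
    · calc (v * t) * a = v * (t * a) := by rw [mul_assoc]
        _ = v * (c * t) := by rw [h2]
        _ = (v * c) * t := by rw [mul_assoc]
        _ = (d * v) * t := by rw [hc, hb]; simp only [mul_assoc]
        _ = d * (v * t) := by rw [mul_assoc]
    · calc (s * u) * (v * t) = s * ((u * v) * t) := by simp only [mul_assoc]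
        _ = s * (c * t) := by rw [← hc]
        _ = s * (t * a) := by rw [h2]
        _ = (s * t) * a := by rw [mul_assoc]
        _ = pw a k * a := by rw [h3]
        _ = pw a (k + 1) := (pw_succ a hk).symm
    · calc (v * t) * (s * u) = (v * (t * s)) * u := by simp only [mul_assoc]
        _ = (v * pw c k) * u := by rw [h4]
        _ = pw d (k + 1) := sandwich_pw hc hb k hk

/-- Key lemma: intertwining data between group elements yields primary conjugacy. -/
lemma pconj_of_data {a b : S} (ha : IsGroupElement a) (hb : IsGroupElement b)
    {s t : S} {k : ℕ} (hk : 1 ≤ k) (h1 : a * s = s * b) (h2 : t * a = b * t)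
    (h3 : s * t = pw a k) (h4 : t * s = pw b k) : PConj a b := by
  obtain ⟨e, a', hea, hae, haa', ha'a, hea', ha'e⟩ := isGroupElement_norm ha
  obtain ⟨f, b', hfb, hbf, hbb', hb'b, hfb', hb'f⟩ := isGroupElement_norm hb
  have hTb : pw a k * s = s * pw b k := pw_intertwine h1.symm k hk
  have hbT : pw b k * t = t * pw a k := pw_intertwine h2 k hk
  have haak : pw a k * pw a' k = e := pw_mul_pw_inv haa' ha'a ha'e k hk
  have hf : pw b' k * pw b k = f := pw_mul_pw_inv hb'b hbb' hbf k hk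
  refine ⟨s, f * (t * (pw a' k * a)), ?_, ?_⟩
  · -- a = s * (f * (t * (pw a' k * a)))
    have hM : s * (f * (t * pw a k)) = pw a (k + k) := by
      calc s * (f * (t * pw a k))
          = s * (f * (pw b k * t)) := by rw [hbT]
        _ = s * (f * pw b k * t) := by rw [mul_assoc f (pw b k) t]
        _ = s * (pw b k * t) := by rw [left_id_pw hfb k hk]
        _ = s * pw b k * t := by rw [mul_assoc]
        _ = pw a k * s * t := by rw [hTb]
        _ = pw a k * (s * t) := by rw [mul_assoc]
        _ = pw a k * pw a k := by rw [h3]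
        _ = pw a (k + k) := pw_add a k k hk hk
    have hz2 : pw a k * (pw a' (k + k) * a) = pw a' k * a := by
      calc pw a k * (pw a' (k + k) * a)
          = pw a k * (pw a' k * pw a' k * a) := by rw [pw_add a' k k hk hk]
        _ = pw a k * (pw a' k * (pw a' k * a)) := by rw [mul_assoc (pw a' k) (pw a' k) a]
        _ = pw a k * pw a' k * (pw a' k * a) := by rw [← mul_assoc]
        _ = e * (pw a' k * a) := by rw [haak]
        _ = (e * pw a' k) * a := by rw [← mul_assoc]
        _ = pw a' k * a := by rw [left_id_pw hea' k hk]
    calc a = e * a := hea.symm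
      _ = pw a (k + k) * pw a' (k + k) * a := by
          rw [pw_mul_pw_inv haa' ha'a ha'e (k + k) (by omega)]
      _ = pw a (k + k) * (pw a' (k + k) * a) := by rw [mul_assoc]
      _ = s * (f * (t * pw a k)) * (pw a' (k + k) * a) := by rw [hM]
      _ = s * (f * (t * (pw a k * (pw a' (k + k) * a)))) := by simp only [mul_assoc]
      _ = s * (f * (t * (pw a' k * a))) := by rw [hz2]
  · -- b = (f * (t * (pw a' k * a))) * s
    have hstep : pw b k * (t * ((pw a' k * a) * s)) = pw b (k + 1) := by
      calc pw b k * (t * ((pw a' k * a) * s))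
          = (pw b k * t) * ((pw a' k * a) * s) := by
            rw [← mul_assoc (pw b k) t ((pw a' k * a) * s)]
        _ = (t * pw a k) * ((pw a' k * a) * s) := by rw [hbT]
        _ = t * ((pw a k * pw a' k) * (a * s)) := by simp only [mul_assoc]
        _ = t * (e * (a * s)) := by rw [haak]
        _ = t * ((e * a) * s) := by rw [mul_assoc e a s]
        _ = t * (a * s) := by rw [hea]
        _ = (t * a) * s := by rw [mul_assoc]
        _ = (b * t) * s := by rw [h2]
        _ = b * (t * s) := by rw [mul_assoc]
        _ = b * pw b k := by rw [h4]
        _ = pw b k * b := mul_pw_comm b k hk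
        _ = pw b (k + 1) := (pw_succ b hk).symm
    calc b = f * b := hfb.symm
      _ = pw b' k * pw b k * b := by rw [hf]
      _ = pw b' k * (pw b k * b) := by rw [mul_assoc]
      _ = pw b' k * pw b (k + 1) := by rw [← pw_succ b hk]
      _ = pw b' k * (pw b k * (t * ((pw a' k * a) * s))) := by rw [hstep]
      _ = pw b' k * pw b k * (t * ((pw a' k * a) * s)) := by rw [← mul_assoc]
      _ = f * (t * ((pw a' k * a) * s)) := by rw [hf]
      _ = (f * (t * (pw a' k * a))) * s := by simp only [mul_assoc]

theorem sconj_iff_pconj_of_group_elements (a b : S)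
    (ha : IsGroupElement a) (hb : IsGroupElement b) :
    SConj a b ↔ PConj a b := by
  constructor
  · intro h
    obtain ⟨s, t, k, hk, h1, h2, h3, h4⟩ := sconj_data h
    exact pconj_of_data ha hb hk h1 h2 h3 h4
  · exact Relation.TransGen.single
end

section
/- Let S be a regular semigroup and a ∈ S a group-bound element. Then a ∼ a·e_a, i.e., a is conjugate (under the transitive closure of primary conjugacy) to a·e_a. -/
variable {S : Type*} [Semigroup S]

lemma coe_pw (x : S) : ∀ n, 1 ≤ n → ((pw x n : S) : WithOne S) = (x : WithOne S) ^ n := by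
  intro n
  induction n with
  | zero => omega
  | succ m ih =>
    intro _
    match m with
    | 0 => simp [pw]
    | k + 1 =>
      have : pw x (k + 2) = pw x (k + 1) * x := rfl
      rw [this, WithOne.coe_mul, ih (by omega), ← pow_succ]

theorem sconj_mul_idempotent_of_regular
    (hreg : ∀ x : S, ∃ y : S, x = x * y * x)
    (a e : S) (t : ℕ) (ht : 1 ≤ t)
    (he : e * e = e) (hH : HRel (pw a t) e) :
    SConj a (a * e) := by
  induction t, ht using Nat.le_induction generalizing a e with
  | base =>
    obtain ⟨⟨-, u2, hu2⟩, ⟨-, v2, hv2⟩⟩ := hH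
    have hpw : (pw a 1 : S) = a := rfl
    rw [hpw] at hu2 hv2
    have hE : ((e : WithOne S)) * e = (e : WithOne S) := by
      rw [← WithOne.coe_mul, he]
    have hae : a * e = a := by
      have : ((a * e : S) : WithOne S) = (a : S) := by
        rw [WithOne.coe_mul, ← hu2, mul_assoc, hE]
      exact WithOne.coe_inj.mp this
    have hea : e * a = a := by
      have : ((e * a : S) : WithOne S) = (a : S) := by
        rw [WithOne.coe_mul, ← hv2, ← mul_assoc, hE]
      exact WithOne.coe_inj.mp this
    exact Relation.TransGen.single ⟨a, e, hae.symm, hae.trans hea.symm⟩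
  | succ t ht IH =>
      obtain ⟨⟨⟨u1, hu1⟩, u2, hu2⟩, ⟨v1, hv1⟩, v2, hv2⟩ := hH
      rw [coe_pw a (t+1) (by omega)] at hu1 hu2 hv1 hv2
      set A : WithOne S := (a : WithOne S) with hA
      set E : WithOne S := (e : WithOne S) with hEdef
      have hE : E * E = E := by rw [hEdef, ← WithOne.coe_mul, he]
      have hrE : E * A ^ (t+1) = A ^ (t+1) := by
        conv_lhs => rw [← hv2]
        rw [← mul_assoc, hE, hv2]
      have hlE : A ^ (t+1) * E = A ^ (t+1) := by
        conv_lhs => rw [← hu2]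
        rw [mul_assoc, hE, hu2]
      -- the group inverse C of A^(t+1), as an opaque variable
      obtain ⟨C, hC1, hC2⟩ : ∃ c : WithOne S,
          c * A ^ (t+1) = E ∧ A ^ (t+1) * c = E := by
        have hL : (E * (u1 * E)) * A ^ (t+1) = E := by
          rw [mul_assoc, mul_assoc, hrE, hu1, hE]
        have hR : A ^ (t+1) * (E * (v1 * E)) = E := by
          rw [← mul_assoc, hlE, ← mul_assoc, hv1, hE]
        have heq : E * (u1 * E) = E * (v1 * E) := by
          calc E * (u1 * E)
              = (E * (u1 * E)) * E := by rw [mul_assoc, mul_assoc, hE]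
            _ = (E * (u1 * E)) * (A ^ (t+1) * (E * (v1 * E))) := by rw [hR]
            _ = ((E * (u1 * E)) * A ^ (t+1)) * (E * (v1 * E)) := by
                simp only [mul_assoc]
            _ = E * (E * (v1 * E)) := by rw [hL]
            _ = E * (v1 * E) := by rw [← mul_assoc, hE]
        exact ⟨E * (u1 * E), hL, by rw [heq]; exact hR⟩
      -- generalized rewrite lemmas (right-associated)
      have gC1 : ∀ X : WithOne S, C * (A ^ (t+1) * X) = E * X := fun X => by
        rw [← mul_assoc, hC1]
      have gC2 : ∀ X : WithOne S, A ^ (t+1) * (C * X) = E * X := fun X => by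
        rw [← mul_assoc, hC2]
      have grE : ∀ X : WithOne S, E * (A ^ (t+1) * X) = A ^ (t+1) * X := fun X => by
        rw [← mul_assoc, hrE]
      have glE : ∀ X : WithOne S, A ^ (t+1) * (E * X) = A ^ (t+1) * X := fun X => by
        rw [← mul_assoc, hlE]
      have gE : ∀ X : WithOne S, E * (E * X) = E * X := fun X => by
        rw [← mul_assoc, hE]
      have hAA : A * A ^ (t+1) = A ^ (t+1) * A := by rw [← pow_succ, ← pow_succ']
      have gAA : ∀ X : WithOne S, A * (A ^ (t+1) * X) = A ^ (t+1) * (A * X) :=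
        fun X => by rw [← mul_assoc, hAA, mul_assoc]
      have gPS : ∀ X : WithOne S, A * (A ^ t * X) = A ^ (t+1) * X := fun X => by
        rw [← mul_assoc, ← pow_succ']
      have gSP : ∀ X : WithOne S, A ^ t * (A * X) = A ^ (t+1) * X := fun X => by
        rw [← mul_assoc, ← pow_succ]
      -- commutation of E and A
      have h1 : E * (A * E) = A * E := by
        calc E * (A * E)
            = E * (A * (A ^ (t+1) * C)) := by rw [hC2]
          _ = E * (A ^ (t+1) * (A * C)) := by rw [gAA]
          _ = A ^ (t+1) * (A * C) := by rw [grE]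
          _ = A * (A ^ (t+1) * C) := by rw [gAA]
          _ = A * E := by rw [hC2]
      have h2 : E * (A * E) = E * A := by
        calc E * (A * E)
            = C * (A ^ (t+1) * (A * E)) := by rw [gC1]
          _ = C * (A * (A ^ (t+1) * E)) := by rw [gAA]
          _ = C * (A * A ^ (t+1)) := by rw [hlE]
          _ = C * (A ^ (t+1) * A) := by rw [hAA]
          _ = E * A := by rw [gC1]
      have comm : E * A = A * E := h2.symm.trans h1
      have gcomm : ∀ X : WithOne S, E * (A * X) = A * (E * X) := fun X => by
        rw [← mul_assoc, comm, mul_assoc]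
      -- regularity witness
      obtain ⟨y, hy⟩ := hreg a
      set Y : WithOne S := (y : WithOne S) with hY
      have hYA : A * Y * A = A := by
        rw [hA, hY, ← WithOne.coe_mul, ← WithOne.coe_mul, ← hy]
      have gY : ∀ X : WithOne S, A * (Y * (A * X)) = A * X := fun X => by
        calc A * (Y * (A * X)) = (A * Y * A) * X := by simp only [mul_assoc]
          _ = A * X := by rw [hYA]
      have hYA' : A * (Y * A) = A := by rw [← mul_assoc, hYA]
      -- key identity
      have hD : A * (Y * (E * A)) = A * E := by
        calc A * (Y * (E * A))
            = A * (Y * ((A ^ (t+1) * C) * A)) := by rw [hC2]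
          _ = A * (Y * (A ^ (t+1) * (C * A))) := by rw [mul_assoc (A^(t+1)) C A]
          _ = A * (Y * (A * (A ^ t * (C * A)))) := by rw [gPS]
          _ = A * (A ^ t * (C * A)) := by rw [gY]
          _ = A ^ (t+1) * (C * A) := by rw [gPS]
          _ = E * A := by rw [gC2]
          _ = A * E := comm
      -- coercions of b = y*a*a and eb = y*e*a
      have hB : ((y * a * a : S) : WithOne S) = Y * (A * A) := by
        rw [WithOne.coe_mul, WithOne.coe_mul, mul_assoc]
      have hEB : ((y * e * a : S) : WithOne S) = Y * (E * A) := by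
        rw [WithOne.coe_mul, WithOne.coe_mul, mul_assoc]
      have hBpow : ∀ k, 1 ≤ k →
          (((y * a * a : S) : WithOne S)) ^ k = Y * A ^ (k+1) := by
        intro k
        induction k with
        | zero => omega
        | succ m ih =>
          intro _
          match m with
          | 0 => rw [pow_one, hB, pow_two]
          | j + 1 =>
            rw [pow_succ, ih (by omega), hB]
            calc (Y * A ^ (j+2)) * (Y * (A * A))
                = Y * (A ^ (j+2) * (Y * (A * A))) := by rw [mul_assoc]
              _ = Y * ((A ^ (j+1) * A) * (Y * (A * A))) := by rw [← pow_succ]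
              _ = Y * (A ^ (j+1) * (A * (Y * (A * A)))) := by
                  rw [mul_assoc (A^(j+1)) A]
              _ = Y * (A ^ (j+1) * (A * A)) := by rw [gY]
              _ = Y * ((A ^ (j+1) * A) * A) := by rw [mul_assoc (A^(j+1)) A A]
              _ = Y * (A ^ (j+2) * A) := by rw [← pow_succ]
              _ = Y * A ^ (j+2+1) := by rw [← pow_succ]
      have hpwb : ((pw (y * a * a) t : S) : WithOne S) = Y * A ^ (t+1) := by
        rw [coe_pw (y * a * a) t ht, hBpow t ht]
      -- eb idempotent
      have hebid : (y * e * a) * (y * e * a) = y * e * a := by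
        apply WithOne.coe_inj.mp
        rw [WithOne.coe_mul, hEB]
        calc (Y * (E * A)) * (Y * (E * A))
            = Y * (E * (A * (Y * (E * A)))) := by simp only [mul_assoc]
          _ = Y * (E * (A * E)) := by rw [hD]
          _ = Y * (A * E) := by rw [h1]
          _ = Y * (E * A) := by rw [comm]
      -- HRel (pw b t) eb
      have hHb : HRel (pw (y * a * a) t) (y * e * a) := by
        refine ⟨⟨⟨Y * (A * (E * (C * A))), ?_⟩, ⟨((pw (y * a * a) t : S) : WithOne S), ?_⟩⟩,
                ⟨⟨C * A, ?_⟩, ⟨((pw (y * a * a) t : S) : WithOne S), ?_⟩⟩⟩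
        · rw [hpwb, hEB]
          calc (Y * (A * (E * (C * A)))) * (Y * A ^ (t+1))
              = Y * (A * (E * (C * (A * (Y * A ^ (t+1)))))) := by
                simp only [mul_assoc]
            _ = Y * (A * (E * (C * (A * (Y * (A * A ^ t)))))) := by
                rw [pow_succ' A t]
            _ = Y * (A * (E * (C * (A * A ^ t)))) := by rw [gY]
            _ = Y * (A * (E * (C * A ^ (t+1)))) := by rw [← pow_succ']
            _ = Y * (A * (E * (C * (A ^ (t+1) * E)))) := by rw [hlE]
            _ = Y * (A * (E * (E * E))) := by rw [gC1, hE]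
            _ = Y * (A * (E * E)) := by rw [gE]
            _ = Y * (A * E) := by rw [hE]
            _ = Y * (E * A) := by rw [comm]
        · rw [hpwb, hEB]
          calc (Y * A ^ (t+1)) * (Y * (E * A))
              = Y * (A ^ (t+1) * (Y * (E * A))) := by rw [mul_assoc]
            _ = Y * ((A ^ t * A) * (Y * (E * A))) := by rw [← pow_succ]
            _ = Y * (A ^ t * (A * (Y * (E * A)))) := by rw [mul_assoc (A^t) A]
            _ = Y * (A ^ t * (A * E)) := by rw [hD]
            _ = Y * (A ^ (t+1) * E) := by rw [gSP]
            _ = Y * A ^ (t+1) := by rw [hlE]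
        · rw [hpwb, hEB]
          calc (Y * A ^ (t+1)) * (C * A)
              = Y * (A ^ (t+1) * (C * A)) := by rw [mul_assoc]
            _ = Y * (E * A) := by rw [gC2]
        · rw [hpwb, hEB]
          calc (Y * (E * A)) * (Y * A ^ (t+1))
              = Y * (E * (A * (Y * A ^ (t+1)))) := by simp only [mul_assoc]
            _ = Y * (E * (A * (Y * (A * A ^ t)))) := by rw [pow_succ' A t]
            _ = Y * (E * (A * A ^ t)) := by rw [gY]
            _ = Y * (E * A ^ (t+1)) := by rw [← pow_succ']
            _ = Y * A ^ (t+1) := by rw [hrE]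
      have hIH : SConj (y * a * a) ((y * a * a) * (y * e * a)) :=
        IH _ _ hebid hHb
      have s1 : PConj a (y * a * a) := by
        refine ⟨a, y * a, ?_, ?_⟩
        · rw [← mul_assoc]; exact hy
        · rfl
      have s3 : PConj ((y * a * a) * (y * e * a)) (a * e) := by
        refine ⟨y * e * a, a, ?_, ?_⟩
        · apply WithOne.coe_inj.mp
          rw [WithOne.coe_mul, hB, hEB, WithOne.coe_mul, hEB]
          calc (Y * (A * A)) * (Y * (E * A))
              = Y * (A * (A * (Y * (E * A)))) := by simp only [mul_assoc]
            _ = Y * (A * (A * E)) := by rw [hD]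
            _ = Y * (A * (E * A)) := by rw [comm]
            _ = Y * (E * (A * A)) := by rw [gcomm]
            _ = (Y * (E * A)) * A := by simp only [mul_assoc]
        · apply WithOne.coe_inj.mp
          rw [WithOne.coe_mul, WithOne.coe_mul, hEB]
          exact hD.symm
      exact (Relation.TransGen.head s1 hIH).tail s3
end
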